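/- Let d ≥ 3 be an integer, let I ⊆ (0,∞) be an open interval, and let q_+, q_- : I → (0,1) be differentiable functions satisfying q_-(λ) = F_λ(q_+(λ)) and q_+(λ) = F_λ(q_-(λ)) for all λ ∈ I. Then for all λ ∈ I, d/dλ [Φ_λ(q_+(λ), q_-(λ))] = (1/2)[ q_+(λ)^d/(1 + λ q_+(λ)^d) + q_-(λ)^d/(1 + λ q_-(λ)^d) ]. -/

import Mathlib

open Set

/-- The hard-core belief-propagation map `F_λ(q) = 1/(1 + λ q^{d-1})`. -/
noncomputable def hcF (d : ℕ) (lam q : ℝ) : ℝ := 1 / (1 + lam * q ^ (d - 1))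

/-- The bipartite hard-core Bethe free energy functional. -/
noncomputable def hcPhi (d : ℕ) (lam a b : ℝ) : ℝ :=
  (1/2) * Real.log (1 + lam * a ^ d) + (1/2) * Real.log (1 + lam * b ^ d)
    - ((d:ℝ)/2) * Real.log (a + b - a * b)

theorem stmt8 (d : ℕ) (hd : 3 ≤ d) (I : Set ℝ)
    (hI : ∃ a b : ℝ, I = Ioo a b) (hIpos : I ⊆ Ioi 0)
    (qp qm : ℝ → ℝ)
    (hrange : ∀ lam ∈ I, qp lam ∈ Ioo (0:ℝ) 1 ∧ qm lam ∈ Ioo (0:ℝ) 1)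
    (hdiff : ∀ lam ∈ I, DifferentiableAt ℝ qp lam ∧ DifferentiableAt ℝ qm lam)
    (hbp : ∀ lam ∈ I, qm lam = hcF d lam (qp lam) ∧ qp lam = hcF d lam (qm lam)) :
    ∀ lam ∈ I,
      HasDerivAt (fun l => hcPhi d l (qp l) (qm l))
        ((1/2) * ((qp lam) ^ d / (1 + lam * (qp lam) ^ d)
          + (qm lam) ^ d / (1 + lam * (qm lam) ^ d))) lam := by
  intro lam hlam
  obtain ⟨⟨ha0, ha1⟩, ⟨hb0, hb1⟩⟩ := hrange lam hlam
  obtain ⟨hda, hdb⟩ := hdiff lam hlam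
  obtain ⟨hbp1, hbp2⟩ := hbp lam hlam
  have hlampos : (0:ℝ) < lam := hIpos hlam
  obtain ⟨k, rfl⟩ : ∃ k, d = k + 1 := ⟨d - 1, by omega⟩
  set a := qp lam with ha_def
  set b := qm lam with hb_def
  set a' := deriv qp lam with ha'_def
  set b' := deriv qm lam with hb'_def
  have h1 : HasDerivAt qp a' lam := hda.hasDerivAt
  have h2 : HasDerivAt qm b' lam := hdb.hasDerivAt
  have hak : (0:ℝ) < a ^ k := pow_pos ha0 k
  have hbk : (0:ℝ) < b ^ k := pow_pos hb0 k
  have hak1 : (0:ℝ) < a ^ (k+1) := pow_pos ha0 _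
  have hbk1 : (0:ℝ) < b ^ (k+1) := pow_pos hb0 _
  have hP : (0:ℝ) < 1 + lam * a ^ (k+1) := by nlinarith
  have hQ : (0:ℝ) < 1 + lam * b ^ (k+1) := by nlinarith
  have hR : (0:ℝ) < a + b - a * b := by nlinarith
  have hden1 : (0:ℝ) < 1 + lam * a ^ k := by nlinarith
  have hden2 : (0:ℝ) < 1 + lam * b ^ k := by nlinarith
  have key1 : b * (1 + lam * a ^ k) = 1 := by
    rw [hbp1, hcF]
    simp only [Nat.add_sub_cancel]
    field_simp
  have key2 : a * (1 + lam * b ^ k) = 1 := by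
    rw [hbp2, hcF]
    simp only [Nat.add_sub_cancel]
    field_simp
  have idA2 : lam * a ^ k * (a + b - a * b) = (1 - b) * (1 + lam * a ^ (k+1)) := by
    linear_combination key1
  have idB2 : lam * b ^ k * (a + b - a * b) = (1 - a) * (1 + lam * b ^ (k+1)) := by
    linear_combination key2
  have c1 : lam * a ^ k / (1 + lam * a ^ (k+1)) = (1 - b) / (a + b - a * b) := by
    rw [div_eq_div_iff hP.ne' hR.ne']
    linear_combination idA2
  have c2 : lam * b ^ k / (1 + lam * b ^ (k+1)) = (1 - a) / (a + b - a * b) := by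
    rw [div_eq_div_iff hQ.ne' hR.ne']
    linear_combination idB2
  have hpow1 : HasDerivAt (fun l => qp l ^ (k+1)) (((k:ℝ)+1) * a ^ k * a') lam := by
    simpa using h1.fun_pow (k+1)
  have hpow2 : HasDerivAt (fun l => qm l ^ (k+1)) (((k:ℝ)+1) * b ^ k * b') lam := by
    simpa using h2.fun_pow (k+1)
  have hg1 : HasDerivAt (fun l => 1 + l * qp l ^ (k+1))
      (1 * a ^ (k+1) + lam * (((k:ℝ)+1) * a ^ k * a')) lam :=
    ((hasDerivAt_id' (x := lam)).mul hpow1).const_add 1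
  have hg2 : HasDerivAt (fun l => 1 + l * qm l ^ (k+1))
      (1 * b ^ (k+1) + lam * (((k:ℝ)+1) * b ^ k * b')) lam :=
    ((hasDerivAt_id' (x := lam)).mul hpow2).const_add 1
  have hterm1 : HasDerivAt (fun l => (1/2 : ℝ) * Real.log (1 + l * qp l ^ (k+1)))
      ((1/2 : ℝ) * ((1 * a ^ (k+1) + lam * (((k:ℝ)+1) * a ^ k * a')) / (1 + lam * a ^ (k+1)))) lam :=
    (hg1.log hP.ne').const_mul (1/2 : ℝ)
  have hterm2 : HasDerivAt (fun l => (1/2 : ℝ) * Real.log (1 + l * qm l ^ (k+1)))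
      ((1/2 : ℝ) * ((1 * b ^ (k+1) + lam * (((k:ℝ)+1) * b ^ k * b')) / (1 + lam * b ^ (k+1)))) lam :=
    (hg2.log hQ.ne').const_mul (1/2 : ℝ)
  have hden : HasDerivAt (fun l => qp l + qm l - qp l * qm l)
      (a' + b' - (a' * b + a * b')) lam := (h1.add h2).sub (h1.mul h2)
  have hterm3 : HasDerivAt (fun l => (((k+1 : ℕ) : ℝ)/2) * Real.log (qp l + qm l - qp l * qm l))
      ((((k+1 : ℕ) : ℝ)/2) * ((a' + b' - (a' * b + a * b')) / (a + b - a * b))) lam :=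
    (hden.log hR.ne').const_mul _
  have H := (hterm1.add hterm2).sub hterm3
  simp only [hcPhi]
  refine H.congr_deriv (Eq.symm ?_)
  push_cast
  linear_combination (-(((k:ℝ)+1)/2) * a') * c1 + (-(((k:ℝ)+1)/2) * b') * c2
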